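/- arXiv:1709.03899 — 3 statements merged into one kernel-verified Lean document; each statement's English description precedes it below -/
import Mathlib

section
/- Let C be an extension-closed pseudo-variety of finite groups, G ≤ Aut(T), and M ≤ H normal subgroups of G with G/H ∈ C. If G has the C-CSP modulo M, then H has the C-CSP modulo M: every K ⊴ H with H/K ∈ C and K ≥ M contains a level stabilizer of H. -/
section AuxCSP

variable {A : Type} [Group A]

def conjSub (g : A) (K : Subgroup A) : Subgroup A where
  carrier := {x | g⁻¹ * x * g ∈ K}
  one_mem' := by simpa using one_mem K
  mul_mem' := by
    intro x y hx hy
    have : g⁻¹ * (x * y) * g = (g⁻¹ * x * g) * (g⁻¹ * y * g) := by group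
    simpa [Set.mem_setOf_eq, this] using mul_mem hx hy
  inv_mem' := by
    intro x hx
    have : g⁻¹ * x⁻¹ * g = (g⁻¹ * x * g)⁻¹ := by group
    simpa [Set.mem_setOf_eq, this] using K.inv_mem hx

lemma mem_conjSub {g x : A} {K : Subgroup A} : x ∈ conjSub g K ↔ g⁻¹ * x * g ∈ K := Iff.rfl

lemma conjSub_one (K : Subgroup A) : conjSub (1 : A) K = K := by
  ext x; simp [mem_conjSub]

lemma conjSub_mul (g h : A) (K : Subgroup A) :
    conjSub (g * h) K = conjSub g (conjSub h K) := by
  ext x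
  simp only [mem_conjSub]
  constructor <;> intro hx
  · have : h⁻¹ * (g⁻¹ * x * g) * h = (g * h)⁻¹ * x * (g * h) := by group
    rwa [this]
  · have : (g * h)⁻¹ * x * (g * h) = h⁻¹ * (g⁻¹ * x * g) * h := by group
    rwa [this]

lemma conjSub_eq_self {H K : Subgroup A}
    (hKnorm : ∀ h ∈ H, ∀ k ∈ K, h * k * h⁻¹ ∈ K) {h : A} (hh : h ∈ H) :
    conjSub h K = K := by
  ext x
  simp only [mem_conjSub]
  constructor <;> intro hx
  · have := hKnorm h hh _ hx
    simpa [mul_assoc] using this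
  · have := hKnorm h⁻¹ (inv_mem hh) _ hx
    simpa [mul_assoc] using this

variable (C : ∀ (E : Type) [Group E], Prop)

lemma C_inf
    (hCsub : ∀ (E F : Type) [Group E] [Group F] (f : F →* E),
      Function.Injective f → C E → C F)
    (hCprod : ∀ (E F : Type) [Group E] [Group F], C E → C F → C (E × F))
    (H S T : Subgroup A)
    [hS : ((S.subgroupOf H)).Normal] [hT : ((T.subgroupOf H)).Normal]
    [hST : (((S ⊓ T).subgroupOf H)).Normal]
    (hCS : C (↥H ⧸ S.subgroupOf H)) (hCT : C (↥H ⧸ T.subgroupOf H)) :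
    C (↥H ⧸ (S ⊓ T).subgroupOf H) := by
  set φ : ↥H →* (↥H ⧸ S.subgroupOf H) × (↥H ⧸ T.subgroupOf H) :=
    (QuotientGroup.mk' (S.subgroupOf H)).prod (QuotientGroup.mk' (T.subgroupOf H)) with hφ
  have hker : (S ⊓ T).subgroupOf H = φ.ker := by
    ext x
    simp only [hφ, MonoidHom.mem_ker, MonoidHom.prod_apply, Prod.mk_eq_one,
      QuotientGroup.mk'_apply, QuotientGroup.eq_one_iff, Subgroup.mem_subgroupOf,
      Subgroup.mem_inf]
  set f : (↥H ⧸ (S ⊓ T).subgroupOf H) →* (↥H ⧸ S.subgroupOf H) × (↥H ⧸ T.subgroupOf H) :=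
    QuotientGroup.lift _ φ (fun x hx => by rw [hker] at hx; exact hx) with hf
  have hinj : Function.Injective f := by
    refine (injective_iff_map_eq_one f).mpr ?_
    intro x
    refine QuotientGroup.induction_on x ?_
    intro z hz
    have : z ∈ φ.ker := hz
    rw [← hker] at this
    exact (QuotientGroup.eq_one_iff z).mpr this
  exact hCsub _ _ f hinj (hCprod _ _ hCS hCT)

lemma C_finsetInf
    (hCsub : ∀ (E F : Type) [Group E] [Group F] (f : F →* E),
      Function.Injective f → C E → C F)
    (hCquot : ∀ (E F : Type) [Group E] [Group F] (f : E →* F),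
      Function.Surjective f → C E → C F)
    (hCprod : ∀ (E F : Type) [Group E] [Group F], C E → C F → C (E × F))
    (H K : Subgroup A) [hK : (K.subgroupOf H).Normal] (hCK : C (↥H ⧸ K.subgroupOf H))
    (s : Finset (Subgroup A))
    (hs : ∀ S ∈ s, ∃ _ : ((S.subgroupOf H)).Normal, C (↥H ⧸ S.subgroupOf H)) :
    ∃ _ : ((s.inf id).subgroupOf H).Normal, C (↥H ⧸ (s.inf id).subgroupOf H) := by
  classical
  induction s using Finset.induction_on with
  | empty =>
    rw [Finset.inf_empty, Subgroup.top_subgroupOf]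
    refine ⟨inferInstance, ?_⟩
    refine hCquot _ _ (QuotientGroup.map _ _ (MonoidHom.id _) le_top) ?_ hCK
    intro x
    refine QuotientGroup.induction_on x ?_
    intro z
    exact ⟨QuotientGroup.mk z, rfl⟩
  | @insert a s ha ih =>
    obtain ⟨hn1, hc1⟩ := hs a (Finset.mem_insert_self a s)
    obtain ⟨hn2, hc2⟩ := ih (fun S hS => hs S (Finset.mem_insert_of_mem hS))
    rw [Finset.inf_insert, id_eq]
    haveI := hn1; haveI := hn2
    have heq : ((a ⊓ s.inf id).subgroupOf H) =
        (a.subgroupOf H) ⊓ ((s.inf id).subgroupOf H) := by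
      ext x
      simp [Subgroup.mem_subgroupOf]
    haveI : (((a ⊓ s.inf id)).subgroupOf H).Normal := by
      rw [heq]; infer_instance
    exact ⟨this, C_inf C hCsub hCprod H a (s.inf id) hc1 hc2⟩

lemma conjSub_subgroupOf_normal {G H K : Subgroup A} (hHG : H ≤ G)
    (hHnorm : ∀ g ∈ G, ∀ x ∈ H, g * x * g⁻¹ ∈ H)
    (hKnorm : ∀ h ∈ H, ∀ k ∈ K, h * k * h⁻¹ ∈ K)
    {g : A} (hg : g ∈ G) :
    ((conjSub g K).subgroupOf H).Normal := by
  constructor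
  intro n hn h
  rw [Subgroup.mem_subgroupOf, mem_conjSub] at hn ⊢
  have h1 : g⁻¹ * (h : A) * g ∈ H := by
    simpa using hHnorm g⁻¹ (inv_mem hg) _ h.2
  have h3 := hKnorm _ h1 _ hn
  have key : (g⁻¹ * (h:A) * g) * (g⁻¹ * (n:A) * g) * (g⁻¹ * (h:A) * g)⁻¹ =
      g⁻¹ * ((h:A) * (n:A) * (h:A)⁻¹) * g := by group
  rw [key] at h3
  simpa using h3

/-- the conjugation isomorphism of H, for g normalizing H -/
def conjEquivH {G H : Subgroup A} (hHG : H ≤ G)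
    (hHnorm : ∀ g ∈ G, ∀ x ∈ H, g * x * g⁻¹ ∈ H)
    {g : A} (hg : g ∈ G) : ↥H ≃* ↥H where
  toFun := fun h => ⟨g * h * g⁻¹, hHnorm g hg _ h.2⟩
  invFun := fun h => ⟨g⁻¹ * h * g, by simpa using hHnorm g⁻¹ (inv_mem hg) _ h.2⟩
  left_inv := fun h => by ext; simp; group
  right_inv := fun h => by ext; simp; group
  map_mul' := fun x y => by
    ext
    show g * ((x : A) * y) * g⁻¹ = (g * x * g⁻¹) * (g * y * g⁻¹)
    group

lemma C_conj
    (hCsub : ∀ (E F : Type) [Group E] [Group F] (f : F →* E),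
      Function.Injective f → C E → C F)
    (G H K : Subgroup A) (hHG : H ≤ G) (hKH : K ≤ H)
    (hHnorm : ∀ g ∈ G, ∀ x ∈ H, g * x * g⁻¹ ∈ H)
    (hKnorm : ∀ h ∈ H, ∀ k ∈ K, h * k * h⁻¹ ∈ K)
    [hn : (K.subgroupOf H).Normal]
    (hCK : C (↥H ⧸ K.subgroupOf H))
    {g : A} (hg : g ∈ G) :
    ∃ _ : ((conjSub g K).subgroupOf H).Normal, C (↥H ⧸ (conjSub g K).subgroupOf H) := by
  haveI hcn := conjSub_subgroupOf_normal hHG hHnorm hKnorm hg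
  set e := conjEquivH hHG hHnorm hg with he
  have hmap : (K.subgroupOf H).map e.toMonoidHom = (conjSub g K).subgroupOf H := by
    ext x
    simp only [Subgroup.mem_map, Subgroup.mem_subgroupOf, mem_conjSub]
    constructor
    · rintro ⟨y, hy, rfl⟩
      have h1 : (e.toMonoidHom y : A) = g * y * g⁻¹ := rfl
      rw [h1]
      have h2 : g⁻¹ * (g * (y:A) * g⁻¹) * g = y := by group
      rw [h2]
      exact hy
    · intro hx
      refine ⟨⟨g⁻¹ * x * g, by simpa using hHnorm g⁻¹ (inv_mem hg) _ x.2⟩, hx, ?_⟩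
      ext
      show g * (g⁻¹ * (x:A) * g) * g⁻¹ = x
      group
  have equiv := QuotientGroup.congr (K.subgroupOf H) ((conjSub g K).subgroupOf H) e hmap
  exact ⟨hcn, hCsub _ _ equiv.symm.toMonoidHom equiv.symm.injective hCK⟩

end AuxCSP


/-- `ValidWord m l` : `l` is a vertex of the rooted tree whose branching numbers are
given by `m` (the vertex `u` has exactly `m u` children, labelled `0, …, m u - 1`). -/
def ValidWord (m : List ℕ → ℕ) (l : List ℕ) : Prop :=
  ∀ i : Fin l.length, l.get i < m (l.take i)

/-- The vertex set of the rooted locally finite tree with branching function `m`. -/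
def VertT (m : List ℕ → ℕ) := {l : List ℕ // ValidWord m l}

/-- A permutation of the vertices is an automorphism of the rooted tree if it
preserves levels (distance from the root) and the prefix (ancestor) relation. -/
def IsTreeAut {m : List ℕ → ℕ} (f : Equiv.Perm (VertT m)) : Prop :=
  (∀ v : VertT m, (f v).1.length = v.1.length) ∧
    ∀ v w : VertT m, v.1 <+: w.1 → (f v).1 <+: (f w).1

/-- The automorphism group of the rooted locally finite tree with branching
function `m`. -/
def AutGT (m : List ℕ → ℕ) : Subgroup (Equiv.Perm (VertT m)) where
  carrier := {f | IsTreeAut f ∧ IsTreeAut f.symm}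
  one_mem' := ⟨⟨fun _ => rfl, fun _ _ h => h⟩, ⟨fun _ => rfl, fun _ _ h => h⟩⟩
  mul_mem' := by
    rintro f g ⟨⟨hf1, hf2⟩, ⟨hf3, hf4⟩⟩ ⟨⟨hg1, hg2⟩, ⟨hg3, hg4⟩⟩
    refine ⟨⟨fun v => ?_, fun v w h => ?_⟩, ⟨fun v => ?_, fun v w h => ?_⟩⟩
    · show (f (g v)).1.length = v.1.length
      rw [hf1, hg1]
    · exact hf2 _ _ (hg2 _ _ h)
    · show (g.symm (f.symm v)).1.length = v.1.length
      rw [hg3, hf3]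
    · exact hg4 _ _ (hf4 _ _ h)
  inv_mem' := by
    rintro f ⟨h1, h2⟩
    exact ⟨h2, by show IsTreeAut f.symm.symm; rw [Equiv.symm_symm]; exact h1⟩

/-- The pointwise stabilizer of level `n`. -/
def lvlStabT (m : List ℕ → ℕ) (n : ℕ) : Subgroup (AutGT m) where
  carrier := {f | ∀ v : VertT m, v.1.length = n → (f : Equiv.Perm (VertT m)) v = v}
  one_mem' := fun _ _ => rfl
  mul_mem' := by
    intro f g hf hg v hv
    show (f : Equiv.Perm (VertT m)) ((g : Equiv.Perm (VertT m)) v) = v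
    rw [hg v hv, hf v hv]
  inv_mem' := by
    intro f hf v hv
    have h2 : (f : Equiv.Perm (VertT m))⁻¹ v = v := by
      rw [Equiv.Perm.inv_eq_iff_eq]; exact (hf v hv).symm
    simpa using h2

/-- The subgroup of automorphisms supported on the subtree rooted at `u`. -/
def rigidT {m : List ℕ → ℕ} (u : VertT m) : Subgroup (AutGT m) where
  carrier := {f | ∀ w : VertT m, ¬ u.1 <+: w.1 → (f : Equiv.Perm (VertT m)) w = w}
  one_mem' := fun _ _ => rfl
  mul_mem' := by
    intro f g hf hg w hw
    show (f : Equiv.Perm (VertT m)) ((g : Equiv.Perm (VertT m)) w) = w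
    rw [hg w hw, hf w hw]
  inv_mem' := by
    intro f hf w hw
    have h2 : (f : Equiv.Perm (VertT m))⁻¹ w = w := by
      rw [Equiv.Perm.inv_eq_iff_eq]; exact (hf w hw).symm
    simpa using h2

/-- The rigid stabilizer in `G` of the level `n`: the subgroup generated by the
rigid vertex stabilizers `rst_G(u) = G ⊓ rigidT u` over the vertices `u` of level
`n` (as these pairwise commute, it is their product). -/
def ristLT {m : List ℕ → ℕ} (G : Subgroup (AutGT m)) (n : ℕ) : Subgroup (AutGT m) :=
  ⨆ u ∈ {u : VertT m | u.1.length = n}, G ⊓ rigidT u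

/-- `G` acts transitively on every level of the tree. -/
def LevelTransT {m : List ℕ → ℕ} (G : Subgroup (AutGT m)) : Prop :=
  ∀ u v : VertT m, u.1.length = v.1.length →
    ∃ g ∈ G, (g : Equiv.Perm (VertT m)) u = v

/-- Lemma 3.2: let `C` be an extension-closed pseudo-variety of finite
groups, `G ≤ Aut T`, and `M ≤ H` normal subgroups of `G` with `G/H ∈ C`.  If `G`
has the C-CSP modulo `M`, then `H` has the C-CSP modulo `M`: every `K ⊴ H` with
`H/K ∈ C` and `K ≥ M` contains a level stabilizer of `H`. -/
theorem stmt_7 (m : List ℕ → ℕ)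
    (G M H : Subgroup (AutGT m)) (hHG : H ≤ G) (hMH : M ≤ H)
    (hHnorm : ∀ g ∈ G, ∀ x ∈ H, g * x * g⁻¹ ∈ H)
    (hMnorm : ∀ g ∈ G, ∀ x ∈ M, g * x * g⁻¹ ∈ M)
    (C : ∀ (E : Type) [Group E], Prop)
    (hCfin : ∀ (E : Type) [Group E], C E → Finite E)
    (hCsub : ∀ (E F : Type) [Group E] [Group F] (f : F →* E),
      Function.Injective f → C E → C F)
    (hCquot : ∀ (E F : Type) [Group E] [Group F] (f : E →* F),
      Function.Surjective f → C E → C F)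
    (hCprod : ∀ (E F : Type) [Group E] [Group F], C E → C F → C (E × F))
    (hCext : ∀ (E : Type) [Group E] (L : Subgroup E) [L.Normal],
      C L → C (E ⧸ L) → C E)
    [hHGn : (H.subgroupOf G).Normal] (hGH : C (↥G ⧸ H.subgroupOf G))
    (hGmodM : ∀ (K : Subgroup (AutGT m)), K ≤ G → M ≤ K →
      ∀ [hn : (K.subgroupOf G).Normal], C (↥G ⧸ K.subgroupOf G) →
        ∃ n : ℕ, G ⊓ lvlStabT m n ≤ K) :
    ∀ (K : Subgroup (AutGT m)), K ≤ H → M ≤ K →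
      (∀ h ∈ H, ∀ k ∈ K, h * k * h⁻¹ ∈ K) →
      ∀ [hn : (K.subgroupOf H).Normal], C (↥H ⧸ K.subgroupOf H) →
        ∃ n : ℕ, H ⊓ lvlStabT m n ≤ K := by
  intro K hKH hMK hKnorm hn hCK
  classical
  haveI := hn
  haveI := hHGn
  haveI hQfin : Finite (↥G ⧸ H.subgroupOf G) := hCfin _ hGH
  haveI := Fintype.ofFinite (↥G ⧸ H.subgroupOf G)
  have wd : ∀ (a b : ↥G), @Setoid.r _ (QuotientGroup.leftRel (H.subgroupOf G)) a b →
      conjSub (a : AutGT m) K = conjSub (b : AutGT m) K := by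
    intro a b hab
    have hmem : a⁻¹ * b ∈ H.subgroupOf G := QuotientGroup.leftRel_apply.mp hab
    rw [Subgroup.mem_subgroupOf] at hmem
    have hco : ((b : AutGT m)) = (a : AutGT m) * ((a⁻¹ * b : ↥G) : AutGT m) := by
      push_cast; group
    rw [hco, conjSub_mul, conjSub_eq_self hKnorm hmem]
  set F : (↥G ⧸ H.subgroupOf G) → Subgroup (AutGT m) :=
    fun q => Quotient.liftOn' q (fun g => conjSub (g : AutGT m) K) wd with hFdef
  have hF : ∀ g : ↥G, F (QuotientGroup.mk g) = conjSub (g : AutGT m) K := fun g => rfl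
  set N : Subgroup (AutGT m) := ⨅ q, F q with hNdef
  set s : Finset (Subgroup (AutGT m)) := Finset.univ.image F with hsdef
  have hNs : s.inf id = N := by
    refine le_antisymm (le_iInf fun q => Finset.inf_le ?_) (Finset.le_inf ?_)
    · exact Finset.mem_image_of_mem F (Finset.mem_univ q)
    · rintro S hS
      obtain ⟨q, -, rfl⟩ := Finset.mem_image.mp hS
      exact iInf_le F q
  have hNK : N ≤ K := by
    have h1 : F (QuotientGroup.mk (1 : ↥G)) = K := by
      rw [hF]
      simpa using conjSub_one K
    have := iInf_le F (QuotientGroup.mk (1 : ↥G))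
    rwa [h1] at this
  have hNH : N ≤ H := hNK.trans hKH
  have hNG : N ≤ G := hNH.trans hHG
  have hMN : M ≤ N := by
    intro x hx
    rw [Subgroup.mem_iInf]
    intro q
    refine QuotientGroup.induction_on q ?_
    intro g
    rw [hF, mem_conjSub]
    have := hMnorm _ (G.inv_mem g.2) x hx
    rw [inv_inv] at this
    exact hMK this
  haveI hNnormG : (N.subgroupOf G).Normal := by
    constructor
    intro n hnn g
    rw [Subgroup.mem_subgroupOf] at hnn ⊢
    rw [Subgroup.mem_iInf] at hnn
    have hco : ((g * n * g⁻¹ : ↥G) : AutGT m)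
        = (g : AutGT m) * (n : AutGT m) * (g : AutGT m)⁻¹ := by rfl
    rw [hco, Subgroup.mem_iInf]
    intro q
    refine QuotientGroup.induction_on q ?_
    intro x
    rw [hF, mem_conjSub]
    have h1 := hnn (QuotientGroup.mk (g⁻¹ * x))
    rw [hF, mem_conjSub] at h1
    have hco2 : ((g⁻¹ * x : ↥G) : AutGT m) = (g : AutGT m)⁻¹ * (x : AutGT m) := by
      push_cast; rfl
    rw [hco2] at h1
    have key : (x : AutGT m)⁻¹ * ((g : AutGT m) * n * (g : AutGT m)⁻¹) * x
        = ((g:AutGT m)⁻¹ * x)⁻¹ * (n : AutGT m) * ((g:AutGT m)⁻¹ * x) := by group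
    rw [key]
    exact h1
  -- C (H / N)
  have hCHN : ∃ _ : (N.subgroupOf H).Normal, C (↥H ⧸ N.subgroupOf H) := by
    have hs : ∀ S ∈ s, ∃ _ : ((S.subgroupOf H)).Normal, C (↥H ⧸ S.subgroupOf H) := by
      intro S hS
      obtain ⟨q, -, rfl⟩ := Finset.mem_image.mp hS
      refine QuotientGroup.induction_on q ?_
      intro g
      rw [hF]
      exact C_conj C hCsub G H K hHG hKH hHnorm hKnorm hCK g.2
    obtain ⟨n1, c1⟩ := C_finsetInf C hCsub hCquot hCprod H K hCK s hs
    have n2 : (N.subgroupOf H).Normal := by rw [← hNs]; exact n1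
    haveI := n1; haveI := n2
    refine ⟨n2, ?_⟩
    have e := QuotientGroup.quotientMulEquivOfEq
      (show (s.inf id).subgroupOf H = N.subgroupOf H by rw [hNs])
    exact hCquot _ _ e.toMonoidHom e.surjective c1
  obtain ⟨hNHnorm, hCHNq⟩ := hCHN
  haveI := hNHnorm
  -- extension: C (G / N)
  set ψ : ↥H →* ↥G ⧸ N.subgroupOf G :=
    (QuotientGroup.mk' (N.subgroupOf G)).comp (Subgroup.inclusion hHG) with hψ
  have hkerψ : ψ.ker = N.subgroupOf H := by
    ext x
    simp only [hψ, MonoidHom.mem_ker, MonoidHom.comp_apply, QuotientGroup.mk'_apply,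
      QuotientGroup.eq_one_iff, Subgroup.mem_subgroupOf, Subgroup.coe_inclusion]
  set L : Subgroup (↥G ⧸ N.subgroupOf G) := ψ.range with hL
  haveI hLnorm : L.Normal := by
    constructor
    rintro l ⟨h, rfl⟩ gbar
    refine QuotientGroup.induction_on gbar ?_
    intro x
    refine ⟨⟨(x : AutGT m) * (h : AutGT m) * (x : AutGT m)⁻¹, hHnorm _ x.2 _ h.2⟩, ?_⟩
    have : Subgroup.inclusion hHG ⟨(x : AutGT m) * (h : AutGT m) * (x : AutGT m)⁻¹,
        hHnorm _ x.2 _ h.2⟩ = x * (Subgroup.inclusion hHG h) * x⁻¹ := by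
      ext; push_cast; rfl
    simp only [hψ, MonoidHom.comp_apply, QuotientGroup.mk'_apply, this]
    rfl
  have hCL : C ↥L := by
    have e := (QuotientGroup.quotientKerEquivRange ψ).symm
    have hCker : C (↥H ⧸ ψ.ker) := by
      haveI : ψ.ker.Normal := inferInstance
      have e2 := QuotientGroup.quotientMulEquivOfEq hkerψ
      exact hCsub _ _ e2.toMonoidHom e2.injective hCHNq
    exact hCsub _ _ e.toMonoidHom e.injective hCker
  have hLmap : L = (H.subgroupOf G).map (QuotientGroup.mk' (N.subgroupOf G)) := by
    rw [hL, MonoidHom.range_comp, Subgroup.inclusion_range]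
  have hCQL : C ((↥G ⧸ N.subgroupOf G) ⧸ L) := by
    haveI : ((H.subgroupOf G).map (QuotientGroup.mk' (N.subgroupOf G))).Normal :=
      hLmap ▸ hLnorm
    have e1 := QuotientGroup.quotientMulEquivOfEq hLmap
    have hNle : N.subgroupOf G ≤ H.subgroupOf G := fun x hx => hNH hx
    have e2 := QuotientGroup.quotientQuotientEquivQuotient
      (N.subgroupOf G) (H.subgroupOf G) hNle
    exact hCsub _ _ (e1.trans e2).toMonoidHom (e1.trans e2).injective hGH
  have hCGN : C (↥G ⧸ N.subgroupOf G) := hCext _ L hCL hCQL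
  obtain ⟨n, hle⟩ := hGmodM N hNG hMN hCGN
  refine ⟨n, ?_⟩
  intro x hx
  rw [Subgroup.mem_inf] at hx
  exact hNK (hle (Subgroup.mem_inf.mpr ⟨hHG hx.1, hx.2⟩))
end

section
/- For the GGS-group G with constant defining vector and p = 3, the second derived subgroup satisfies ψ(G'') = K' × K' × K', where K = ⟨ba⁻¹⟩^G. -/
/-- The vertex set of the rooted `d`-regular tree: finite words over `Fin d`. -/
abbrev Vert (d : ℕ) := List (Fin d)

/-- A permutation of the vertices sends children of `v` to children of the image
of `v`. -/
def MapsChildren {d : ℕ} (f : Equiv.Perm (Vert d)) : Prop :=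
  ∀ (v : Vert d) (i : Fin d), ∃ j : Fin d, f (v ++ [i]) = f v ++ [j]

/-- The automorphism group of the rooted `d`-regular tree, realised as the subgroup
of permutations of the vertex set which, together with their inverses, map children
to children (equivalently, preserve the root, the levels and the tree structure). -/
def AutT (d : ℕ) : Subgroup (Equiv.Perm (Vert d)) where
  carrier := {f | MapsChildren f ∧ MapsChildren f.symm}
  one_mem' := ⟨fun v i => ⟨i, rfl⟩, fun v i => ⟨i, rfl⟩⟩
  mul_mem' := by
    rintro f g ⟨hf, hf'⟩ ⟨hg, hg'⟩
    refine ⟨fun v i => ?_, fun v i => ?_⟩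
    · obtain ⟨j, hj⟩ := hg v i
      obtain ⟨k, hk⟩ := hf (g v) j
      exact ⟨k, by simp [Equiv.Perm.mul_apply, hj, hk]⟩
    · obtain ⟨j, hj⟩ := hf' v i
      obtain ⟨k, hk⟩ := hg' (f.symm v) j
      exact ⟨k, show g.symm (f.symm (v ++ [i])) = g.symm (f.symm v) ++ [k] by
        rw [hj, hk]⟩
  inv_mem' := by
    rintro f ⟨hf, hf'⟩
    exact ⟨hf', by first | exact hf | simpa [Equiv.Perm.inv_def] using hf⟩

/-- The full pointwise stabilizer of level `n` in `Aut T`. -/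
def lvlStab (d n : ℕ) : Subgroup (AutT d) where
  carrier := {f | ∀ v : Vert d, v.length = n → (f : Equiv.Perm (Vert d)) v = v}
  one_mem' := fun v _ => rfl
  mul_mem' := by
    intro f g hf hg v hv
    simp [Equiv.Perm.mul_apply, hg v hv, hf v hv]
  inv_mem' := by
    intro f hf v hv
    have h := hf v hv
    have h2 : (f : Equiv.Perm (Vert d))⁻¹ v = v := by
      rw [Equiv.Perm.inv_eq_iff_eq]; exact h.symm
    simpa using h2

/-- The subgroup of automorphisms supported on the subtree rooted at the word `u`. -/
def rigid (d : ℕ) (u : Vert d) : Subgroup (AutT d) where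
  carrier := {f | ∀ w : Vert d, ¬ u <+: w → (f : Equiv.Perm (Vert d)) w = w}
  one_mem' := fun w _ => rfl
  mul_mem' := by
    intro f g hf hg w hw
    simp [Equiv.Perm.mul_apply, hg w hw, hf w hw]
  inv_mem' := by
    intro f hf w hw
    have h := hf w hw
    have h2 : (f : Equiv.Perm (Vert d))⁻¹ w = w := by
      rw [Equiv.Perm.inv_eq_iff_eq]; exact h.symm
    simpa using h2

/-- The rigid stabilizer in `G` of the vertex `u`. -/
def ristV {d : ℕ} (G : Subgroup (AutT d)) (u : Vert d) : Subgroup (AutT d) :=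
  G ⊓ rigid d u

/-- The rigid stabilizer in `G` of level `n`: the subgroup generated by (equivalently,
the product of) the rigid vertex stabilizers at level `n`. -/
def ristL {d : ℕ} (G : Subgroup (AutT d)) (n : ℕ) : Subgroup (AutT d) :=
  ⨆ u ∈ {u : Vert d | u.length = n}, ristV G u

/-- `G` acts transitively on every level of the tree. -/
def LevelTransitive {d : ℕ} (G : Subgroup (AutT d)) : Prop :=
  ∀ u v : Vert d, u.length = v.length → ∃ g ∈ G, (g : Equiv.Perm (Vert d)) u = v

section GGS

variable (p : ℕ) [NeZero p]

/-- The rooted automorphism `a` of the `p`-regular tree: it permutes the first-level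
subtrees by the `p`-cycle `x ↦ x + 1`. -/
def gA : List (Fin p) → List (Fin p)
  | [] => []
  | x :: w => (x + 1) :: w

/-- The inverse of `gA`. -/
def gAI : List (Fin p) → List (Fin p)
  | [] => []
  | x :: w => (x - 1) :: w

/-- The directed automorphism `b = (a, a, …, a, b)` of the GGS-group with constant
defining vector. -/
def gB : List (Fin p) → List (Fin p)
  | [] => []
  | x :: w => if (x : ℕ) = p - 1 then x :: gB w else x :: gA p w

/-- The inverse of `gB`. -/
def gBI : List (Fin p) → List (Fin p)
  | [] => []
  | x :: w => if (x : ℕ) = p - 1 then x :: gBI w else x :: gAI p w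

theorem gAI_gA : ∀ l, gAI p (gA p l) = l
  | [] => rfl
  | x :: w => by simp [gA, gAI]

theorem gA_gAI : ∀ l, gA p (gAI p l) = l
  | [] => rfl
  | x :: w => by simp [gA, gAI]

theorem gBI_gB : ∀ l, gBI p (gB p l) = l
  | [] => rfl
  | x :: w => by
    by_cases h : (x : ℕ) = p - 1
    · simp [gB, gBI, h, gBI_gB w]
    · simp [gB, gBI, h, gAI_gA]

theorem gB_gBI : ∀ l, gB p (gBI p l) = l
  | [] => rfl
  | x :: w => by
    by_cases h : (x : ℕ) = p - 1
    · simp [gB, gBI, h, gB_gBI w]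
    · simp [gB, gBI, h, gA_gAI]

/-- `a` as a permutation of the vertices. -/
def aPerm : Equiv.Perm (Vert p) :=
  ⟨gA p, gAI p, gAI_gA p, gA_gAI p⟩

/-- `b` as a permutation of the vertices. -/
def bPerm : Equiv.Perm (Vert p) :=
  ⟨gB p, gBI p, gBI_gB p, gB_gBI p⟩

theorem gA_append (v : Vert p) (i : Fin p) : ∃ j, gA p (v ++ [i]) = gA p v ++ [j] := by
  cases v with
  | nil => exact ⟨i + 1, rfl⟩
  | cons x w => exact ⟨i, rfl⟩

theorem gAI_append (v : Vert p) (i : Fin p) : ∃ j, gAI p (v ++ [i]) = gAI p v ++ [j] := by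
  cases v with
  | nil => exact ⟨i - 1, rfl⟩
  | cons x w => exact ⟨i, rfl⟩

theorem gB_append : ∀ (v : Vert p) (i : Fin p), ∃ j, gB p (v ++ [i]) = gB p v ++ [j]
  | [], i => by
    by_cases h : (i : ℕ) = p - 1 <;> exact ⟨i, by simp [gB, gA, h]⟩
  | x :: w, i => by
    by_cases h : (x : ℕ) = p - 1
    · obtain ⟨j, hj⟩ := gB_append w i
      exact ⟨j, by simp [gB, h, hj]⟩
    · obtain ⟨j, hj⟩ := gA_append p w i
      exact ⟨j, by simp [gB, h, hj]⟩

theorem gBI_append : ∀ (v : Vert p) (i : Fin p), ∃ j, gBI p (v ++ [i]) = gBI p v ++ [j]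
  | [], i => by
    by_cases h : (i : ℕ) = p - 1 <;> exact ⟨i, by simp [gBI, gAI, h]⟩
  | x :: w, i => by
    by_cases h : (x : ℕ) = p - 1
    · obtain ⟨j, hj⟩ := gBI_append w i
      exact ⟨j, by simp [gBI, h, hj]⟩
    · obtain ⟨j, hj⟩ := gAI_append p w i
      exact ⟨j, by simp [gBI, h, hj]⟩

/-- The generator `a` of the GGS-group, as a tree automorphism. -/
def aut_a : AutT p :=
  ⟨aPerm p, gA_append p, gAI_append p⟩

/-- The generator `b` of the GGS-group (constant defining vector), as a tree
automorphism. -/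
def aut_b : AutT p :=
  ⟨bPerm p, gB_append p, gBI_append p⟩

/-- The GGS-group with constant defining vector: `G = ⟨a, b⟩`. -/
def GGS : Subgroup (AutT p) :=
  Subgroup.closure {aut_a p, aut_b p}

/-- `K = ⟨b a⁻¹⟩^G`, the normal closure of `b a⁻¹` in `G`. -/
def GGSK : Subgroup (AutT p) :=
  Subgroup.closure {x | ∃ g ∈ GGS p, x = g * (aut_b p * (aut_a p)⁻¹) * g⁻¹}

end GGS

namespace Stmt12

open Subgroup
open scoped commutatorElement

abbrev Pm := Equiv.Perm (Vert 3)

noncomputable abbrev Ea : AutT 3 := aut_a 3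
noncomputable abbrev Eb : AutT 3 := aut_b 3
abbrev GG : Subgroup (AutT 3) := GGS 3
abbrev KK : Subgroup (AutT 3) := GGSK 3

lemma Ea_mem : Ea ∈ GG := subset_closure (Set.mem_insert _ _)
lemma Eb_mem : Eb ∈ GG := subset_closure (Set.mem_insert_of_mem _ rfl)

/-- every tree automorphism fixes the root -/
lemma autT_nil (f : AutT 3) : (f : Pm) [] = [] := by
  obtain ⟨hf, hf'⟩ := f.2
  rcases List.eq_nil_or_concat ((f : Pm) []) with h | ⟨q, i, h⟩
  · exact h
  · exfalso
    obtain ⟨j, hj⟩ := hf' q i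
    have h1 : (f : Pm).symm ((f : Pm) []) = [] := (f : Pm).symm_apply_apply []
    rw [h, List.concat_eq_append, hj] at h1
    exact List.append_ne_nil_of_right_ne_nil _ (List.cons_ne_nil j []) h1

/-- `f` stabilizes the first level with sections `k 0, k 1, k 2`. -/
def SecA (f : AutT 3) (k : Fin 3 → AutT 3) : Prop :=
  ∀ (x : Fin 3) (w : Vert 3), (f : Pm) (x :: w) = x :: (k x : Pm) w

lemma sec_one : SecA 1 (fun _ => 1) := fun _ _ => rfl

lemma sec_congr {f : AutT 3} {k k' : Fin 3 → AutT 3} (h : SecA f k) (hk : k = k') :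
    SecA f k' := hk ▸ h

lemma sec_mul {f g : AutT 3} {k k' : Fin 3 → AutT 3} (hf : SecA f k) (hg : SecA g k') :
    SecA (f * g) (fun x => k x * k' x) := by
  intro x w
  show (f : Pm) ((g : Pm) (x :: w)) = _
  rw [hg, hf]
  rfl

lemma sec_inv {f : AutT 3} {k : Fin 3 → AutT 3} (hf : SecA f k) :
    SecA f⁻¹ (fun x => (k x)⁻¹) := by
  intro x w
  show (f : Pm)⁻¹ (x :: w) = x :: ((k x : Pm))⁻¹ w
  rw [Equiv.Perm.inv_eq_iff_eq, hf]
  simp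

lemma sec_ext {f g : AutT 3} {k k' : Fin 3 → AutT 3} (hf : SecA f k) (hg : SecA g k')
    (h : k = k') : f = g := by
  subst h
  apply Subtype.ext; apply Equiv.ext
  intro v
  cases v with
  | nil => rw [autT_nil, autT_nil]
  | cons x w => rw [hf, hg]

lemma Ea_apply (x : Fin 3) (w : Vert 3) : (Ea : Pm) (x :: w) = (x + 1) :: w := rfl

lemma Ea_inv_apply (x : Fin 3) (w : Vert 3) : ((Ea⁻¹ : AutT 3) : Pm) (x :: w) = (x - 1) :: w := rfl

lemma sec_conj_a {f : AutT 3} {k : Fin 3 → AutT 3} (hf : SecA f k) :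
    SecA (Ea * f * Ea⁻¹) (fun x => k (x - 1)) := by
  intro x w
  show (Ea : Pm) ((f : Pm) (((Ea⁻¹ : AutT 3) : Pm) (x :: w))) = x :: (k (x-1) : Pm) w
  rw [Ea_inv_apply, hf, Ea_apply, sub_add_cancel]

lemma sec_conj_a_inv {f : AutT 3} {k : Fin 3 → AutT 3} (hf : SecA f k) :
    SecA (Ea⁻¹ * f * Ea) (fun x => k (x + 1)) := by
  intro x w
  show ((Ea⁻¹ : AutT 3) : Pm) ((f : Pm) ((Ea : Pm) (x :: w))) = x :: (k (x+1) : Pm) w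
  rw [Ea_apply, hf, Ea_inv_apply, add_sub_cancel_right]

lemma sec_b : SecA Eb ![Ea, Ea, Eb] := by
  intro x w
  show gB 3 (x :: w) = _
  fin_cases x <;> simp [gB] <;> rfl

end Stmt12
namespace Stmt12

open Subgroup
open scoped commutatorElement

/-- conjugation by elements of `G` preserves `K` -/
lemma K_conj {g : AutT 3} (hg : g ∈ GG) : ∀ {k : AutT 3}, k ∈ KK → g * k * g⁻¹ ∈ KK := by
  intro k hk
  induction hk using closure_induction with
  | mem x hx =>
    obtain ⟨h, hh, rfl⟩ := hx
    refine subset_closure ⟨g * h, mul_mem hg hh, by group⟩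
  | one => simpa using one_mem KK
  | mul x y hx hy ihx ihy =>
    have : g * (x * y) * g⁻¹ = (g * x * g⁻¹) * (g * y * g⁻¹) := by group
    rw [this]; exact mul_mem ihx ihy
  | inv x hx ihx =>
    have : g * x⁻¹ * g⁻¹ = (g * x * g⁻¹)⁻¹ := by group
    rw [this]; exact inv_mem ihx

/-- conjugation stability of subgroup commutators -/
lemma conj_commutator {H₁ H₂ : Subgroup (AutT 3)} {g : AutT 3}
    (h1 : ∀ {h : AutT 3}, h ∈ H₁ → g * h * g⁻¹ ∈ H₁)
    (h2 : ∀ {h : AutT 3}, h ∈ H₂ → g * h * g⁻¹ ∈ H₂) :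
    ∀ {x : AutT 3}, x ∈ ⁅H₁, H₂⁆ → g * x * g⁻¹ ∈ ⁅H₁, H₂⁆ := by
  intro x hx
  rw [Subgroup.commutator_def] at hx ⊢
  induction hx using closure_induction with
  | mem x hx =>
    obtain ⟨a, ha, b, hb, rfl⟩ := hx
    refine subset_closure ⟨g * a * g⁻¹, h1 ha, g * b * g⁻¹, h2 hb, ?_⟩
    have := map_commutatorElement (MulAut.conj g).toMonoidHom a b
    simp only [commutatorElement_def]; group
  | one => simpa using one_mem _
  | mul x y hx hy ihx ihy =>
    have : g * (x * y) * g⁻¹ = (g * x * g⁻¹) * (g * y * g⁻¹) := by group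
    rw [this]; exact mul_mem ihx ihy
  | inv x hx ihx =>
    have : g * x⁻¹ * g⁻¹ = (g * x * g⁻¹)⁻¹ := by group
    rw [this]; exact inv_mem ihx

lemma G_conj {g : AutT 3} (hg : g ∈ GG) : ∀ {h : AutT 3}, h ∈ GG → g * h * g⁻¹ ∈ GG :=
  fun hh => mul_mem (mul_mem hg hh) (inv_mem hg)

lemma G'_conj {g : AutT 3} (hg : g ∈ GG) :
    ∀ {x : AutT 3}, x ∈ ⁅GG, GG⁆ → g * x * g⁻¹ ∈ ⁅GG, GG⁆ :=
  conj_commutator (G_conj hg) (G_conj hg)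

lemma G''_conj {g : AutT 3} (hg : g ∈ GG) :
    ∀ {x : AutT 3}, x ∈ ⁅(⁅GG, GG⁆ : Subgroup (AutT 3)), ⁅GG, GG⁆⁆ →
      g * x * g⁻¹ ∈ ⁅(⁅GG, GG⁆ : Subgroup (AutT 3)), ⁅GG, GG⁆⁆ :=
  conj_commutator (G'_conj hg) (G'_conj hg)

/-- commutator of a closure is controlled by commutators of generators,
for a subgroup normalized by the closure. -/
lemma commClosLe {Γ : Type*} [Group Γ] (S : Set Γ) (H : Subgroup Γ)
    (hn : ∀ g ∈ Subgroup.closure S, ∀ h ∈ H, g * h * g⁻¹ ∈ H)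
    (hb : ∀ g ∈ S, ∀ h ∈ S, ⁅g, h⁆ ∈ H) :
    ⁅Subgroup.closure S, Subgroup.closure S⁆ ≤ H := by
  rw [Subgroup.commutator_le]
  intro g hg h hh
  induction hg, hh using closure_induction₂ with
  | mem x y hx hy => exact hb x hx y hy
  | one_left x hx => simpa using one_mem H
  | one_right x hx => simpa using one_mem H
  | mul_left x y z hx hy hz ih1 ih2 =>
    have : ⁅x * y, z⁆ = x * ⁅y, z⁆ * x⁻¹ * ⁅x, z⁆ := by group
    rw [this]; exact mul_mem (hn x hx _ ih2) ih1
  | mul_right y z x hy hz hx ih1 ih2 =>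
    have : ⁅x, y * z⁆ = ⁅x, y⁆ * (y * ⁅x, z⁆ * y⁻¹) := by group
    rw [this]; exact mul_mem ih1 (hn y hy _ ih2)
  | inv_left x y hx hy ih =>
    have : ⁅x⁻¹, y⁆ = x⁻¹ * ⁅x, y⁆⁻¹ * x⁻¹⁻¹ := by group
    rw [this]
    exact hn x⁻¹ (inv_mem hx) _ (inv_mem ih)
  | inv_right x y hx hy ih =>
    have : ⁅x, y⁻¹⁆ = y⁻¹ * ⁅x, y⁆⁻¹ * y⁻¹⁻¹ := by group
    rw [this]
    exact hn y⁻¹ (inv_mem hy) _ (inv_mem ih)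

end Stmt12
namespace Stmt12

open Subgroup
open scoped commutatorElement

noncomputable abbrev yy : AutT 3 := Eb * Ea⁻¹

lemma yy_mem : yy ∈ KK := subset_closure ⟨1, one_mem GG, by rw [one_mul, inv_one, mul_one]⟩

lemma sec_c : SecA ⁅Ea, Eb⁆ ![yy, 1, yy⁻¹] := by
  have h1 := sec_conj_a sec_b
  have h2 := sec_mul h1 (sec_inv sec_b)
  refine sec_congr h2 ?_
  funext x
  fin_cases x <;> simp <;> rfl

lemma c_mem : ⁅Ea, Eb⁆ ∈ ⁅GG, GG⁆ := commutator_mem_commutator Ea_mem Eb_mem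

noncomputable abbrev dd : AutT 3 := Ea * ⁅Ea, Eb⁆ * Ea⁻¹

lemma sec_d : SecA dd ![yy⁻¹, yy, 1] := by
  refine sec_congr (sec_conj_a sec_c) ?_
  funext x
  fin_cases x <;> simp <;> rfl

lemma d_mem : dd ∈ ⁅GG, GG⁆ := G'_conj Ea_mem c_mem

/-- first-level sections lying in `N` -/
def liftSub (N : Subgroup (AutT 3)) : Subgroup (AutT 3) where
  carrier := {f : AutT 3 | ∀ x : Fin 3, ∃ k ∈ N, ∀ w : Vert 3,
    (f : Equiv.Perm (Vert 3)) (x :: w) = x :: (k : Equiv.Perm (Vert 3)) w}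
  one_mem' := fun x => ⟨1, one_mem N, fun w => rfl⟩
  mul_mem' := by
    rintro f g hf hg x
    obtain ⟨k, hk, hfk⟩ := hf x
    obtain ⟨k', hk', hgk⟩ := hg x
    refine ⟨k * k', mul_mem hk hk', fun w => ?_⟩
    show (f : Pm) ((g : Pm) (x :: w)) = _
    rw [hgk, hfk]
    rfl
  inv_mem' := by
    rintro f hf x
    obtain ⟨k, hk, hfk⟩ := hf x
    refine ⟨k⁻¹, inv_mem hk, fun w => ?_⟩
    show (f : Pm)⁻¹ (x :: w) = x :: ((k : Pm))⁻¹ w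
    rw [Equiv.Perm.inv_eq_iff_eq, hfk]
    simp

lemma mem_liftSub_iff {N : Subgroup (AutT 3)} {f : AutT 3} :
    f ∈ liftSub N ↔ ∃ k : Fin 3 → AutT 3, (∀ x, k x ∈ N) ∧ SecA f k := by
  constructor
  · intro h
    choose k hk hs using h
    exact ⟨k, hk, fun x w => hs x w⟩
  · rintro ⟨k, hk, hs⟩ x
    exact ⟨k x, hk x, hs x⟩

lemma c_mem_liftK : ⁅Ea, Eb⁆ ∈ liftSub KK := by
  rw [mem_liftSub_iff]
  refine ⟨![yy, 1, yy⁻¹], ?_, sec_c⟩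
  intro x
  fin_cases x
  · exact yy_mem
  · exact one_mem KK
  · exact inv_mem yy_mem

/-- `G` normalizes `liftSub KK` -/
lemma liftK_norm : ∀ g ∈ GG, ∀ f ∈ liftSub KK, g * f * g⁻¹ ∈ liftSub KK := by
  have key : ∀ g ∈ GG, (∀ f ∈ liftSub KK, g * f * g⁻¹ ∈ liftSub KK) ∧
      (∀ f ∈ liftSub KK, g⁻¹ * f * g ∈ liftSub KK) := by
    intro g hg
    induction hg using closure_induction with
    | mem x hx =>
      rcases hx with rfl | hx
      · -- x = Ea
        constructor
        · intro f hf
          rw [mem_liftSub_iff] at hf ⊢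
          obtain ⟨k, hk, hs⟩ := hf
          exact ⟨fun x => k (x - 1), fun x => hk _, sec_conj_a hs⟩
        · intro f hf
          rw [mem_liftSub_iff] at hf ⊢
          obtain ⟨k, hk, hs⟩ := hf
          exact ⟨fun x => k (x + 1), fun x => hk _, sec_conj_a_inv hs⟩
      · -- x = Eb
        rw [Set.mem_singleton_iff] at hx
        subst hx
        constructor
        · intro f hf
          rw [mem_liftSub_iff] at hf ⊢
          obtain ⟨k, hk, hs⟩ := hf
          refine ⟨fun x => ![Ea, Ea, Eb] x * k x * (![Ea, Ea, Eb] x)⁻¹, fun x => ?_, ?_⟩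
          · refine K_conj ?_ (hk x)
            fin_cases x <;> simp [Ea_mem, Eb_mem]
          · exact sec_mul (sec_mul sec_b hs) (sec_inv sec_b)
        · intro f hf
          rw [mem_liftSub_iff] at hf ⊢
          obtain ⟨k, hk, hs⟩ := hf
          refine ⟨fun x => (![Ea, Ea, Eb] x)⁻¹ * k x * ((![Ea, Ea, Eb] x)⁻¹)⁻¹,
            fun x => ?_, ?_⟩
          · refine K_conj (inv_mem ?_) (hk x)
            fin_cases x <;> simp [Ea_mem, Eb_mem]
          · have := sec_mul (sec_mul (sec_inv sec_b) hs) (sec_inv (sec_inv sec_b))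
            refine sec_congr ?_ rfl
            have e : Eb⁻¹ * f * Eb = Eb⁻¹ * f * (Eb⁻¹)⁻¹ := by group
            rw [e]
            exact this
    | one => constructor <;> intro f hf <;> simpa using hf
    | mul x z hx hz ihx ihz =>
      constructor
      · intro f hf
        have e : x * z * f * (x * z)⁻¹ = x * (z * f * z⁻¹) * x⁻¹ := by group
        rw [e]
        exact ihx.1 _ (ihz.1 f hf)
      · intro f hf
        have e : (x * z)⁻¹ * f * (x * z) = z⁻¹ * (x⁻¹ * f * x) * z := by group
        rw [e]
        exact ihz.2 _ (ihx.2 f hf)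
    | inv x hx ihx =>
      constructor
      · intro f hf
        have e : x⁻¹ * f * x⁻¹⁻¹ = x⁻¹ * f * x := by group
        rw [e]
        exact ihx.2 f hf
      · intro f hf
        have e : x⁻¹⁻¹ * f * x⁻¹ = x * f * x⁻¹ := by group
        rw [e]
        exact ihx.1 f hf
  exact fun g hg => (key g hg).1

/-- ψ(G') ≤ K × K × K -/
lemma G'_le_liftK : ⁅GG, GG⁆ ≤ liftSub KK := by
  refine commClosLe _ _ liftK_norm ?_
  intro g hg h hh
  rcases hg with rfl | hg <;> rcases hh with rfl | hh
  · simpa using one_mem (liftSub KK)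
  · rw [Set.mem_singleton_iff] at hh; subst hh
    exact c_mem_liftK
  · rw [Set.mem_singleton_iff] at hg; subst hg
    rw [← commutatorElement_inv]
    exact inv_mem c_mem_liftK
  · rw [Set.mem_singleton_iff] at hg hh; subst hg; subst hh
    simpa using one_mem (liftSub KK)

/-- ψ(G'') ≤ K' × K' × K' -/
lemma G''_le : ⁅(⁅GG, GG⁆ : Subgroup (AutT 3)), ⁅GG, GG⁆⁆ ≤ liftSub ⁅KK, KK⁆ := by
  rw [Subgroup.commutator_le]
  intro g hg h hh
  obtain ⟨k, hk, hks⟩ := mem_liftSub_iff.mp (G'_le_liftK hg)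
  obtain ⟨k', hk', hks'⟩ := mem_liftSub_iff.mp (G'_le_liftK hh)
  rw [mem_liftSub_iff]
  refine ⟨fun x => ⁅k x, k' x⁆, fun x => commutator_mem_commutator (hk x) (hk' x), ?_⟩
  exact sec_mul (sec_mul (sec_mul hks hks') (sec_inv hks)) (sec_inv hks')

end Stmt12
namespace Stmt12

open Subgroup
open scoped commutatorElement

/-- fractality at the first coordinate -/
lemma frac : ∀ x ∈ GG, ∃ s ∈ GG, ∃ κ : Fin 3 → AutT 3, SecA s κ ∧ κ 0 = x := by
  intro x hx
  induction hx using closure_induction with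
  | mem x hx =>
    rcases hx with rfl | hx
    · exact ⟨Eb, Eb_mem, ![Ea, Ea, Eb], sec_b, by simp⟩
    · rw [Set.mem_singleton_iff] at hx; subst hx
      refine ⟨Ea * Eb * Ea⁻¹, G_conj Ea_mem Eb_mem, fun x => ![Ea, Ea, Eb] (x - 1),
        sec_conj_a sec_b, ?_⟩
      simp
  | one => exact ⟨1, one_mem GG, fun _ => 1, sec_one, rfl⟩
  | mul x z hx hz ihx ihz =>
    obtain ⟨s, hs, κ, hκ, h0⟩ := ihx
    obtain ⟨t, ht, μ, hμ, h0'⟩ := ihz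
    exact ⟨s * t, mul_mem hs ht, fun i => κ i * μ i, sec_mul hκ hμ, by dsimp only; rw [h0, h0']⟩
  | inv x hx ihx =>
    obtain ⟨s, hs, κ, hκ, h0⟩ := ihx
    exact ⟨s⁻¹, inv_mem hs, fun i => (κ i)⁻¹, sec_inv hκ, by dsimp only; rw [h0]⟩

lemma claimB1 : ∀ k ∈ KK, ∃ g ∈ ⁅GG, GG⁆, ∃ n : AutT 3, SecA g ![k, 1, n] := by
  intro k hk
  induction hk using closure_induction with
  | mem x hx =>
    obtain ⟨s₀, hs₀, rfl⟩ := hx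
    obtain ⟨s, hs, κ, hκ, h0⟩ := frac s₀ hs₀
    refine ⟨s * ⁅Ea, Eb⁆ * s⁻¹, G'_conj hs c_mem, κ 2 * yy⁻¹ * (κ 2)⁻¹, ?_⟩
    refine sec_congr (sec_mul (sec_mul hκ sec_c) (sec_inv hκ)) ?_
    funext t
    fin_cases t
    · simp [h0]
    · simp
    · simp
  | one =>
    refine ⟨1, one_mem _, 1, sec_congr sec_one ?_⟩
    funext t; fin_cases t <;> simp
  | mul x z hx hz ihx ihz =>
    obtain ⟨g, hg, n, hgs⟩ := ihx
    obtain ⟨g', hg', n', hgs'⟩ := ihz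
    refine ⟨g * g', mul_mem hg hg', n * n', sec_congr (sec_mul hgs hgs') ?_⟩
    funext t; fin_cases t <;> simp
  | inv x hx ihx =>
    obtain ⟨g, hg, n, hgs⟩ := ihx
    refine ⟨g⁻¹, inv_mem hg, n⁻¹, sec_congr (sec_inv hgs) ?_⟩
    funext t; fin_cases t <;> simp

lemma claimB2 : ∀ k ∈ KK, ∃ g ∈ ⁅GG, GG⁆, ∃ m : AutT 3, SecA g ![k, m, 1] := by
  intro k hk
  induction hk using closure_induction with
  | mem x hx =>
    obtain ⟨s₀, hs₀, rfl⟩ := hx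
    obtain ⟨s, hs, κ, hκ, h0⟩ := frac s₀ hs₀
    refine ⟨(s * dd * s⁻¹)⁻¹, inv_mem (G'_conj hs d_mem), (κ 1 * yy * (κ 1)⁻¹)⁻¹, ?_⟩
    refine sec_congr (sec_inv (sec_mul (sec_mul hκ sec_d) (sec_inv hκ))) ?_
    funext t
    fin_cases t
    · simp [h0]
      group
    · simp
    · simp
  | one =>
    refine ⟨1, one_mem _, 1, sec_congr sec_one ?_⟩
    funext t; fin_cases t <;> simp
  | mul x z hx hz ihx ihz =>
    obtain ⟨g, hg, n, hgs⟩ := ihx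
    obtain ⟨g', hg', n', hgs'⟩ := ihz
    refine ⟨g * g', mul_mem hg hg', n * n', sec_congr (sec_mul hgs hgs') ?_⟩
    funext t; fin_cases t <;> simp
  | inv x hx ihx =>
    obtain ⟨g, hg, n, hgs⟩ := ihx
    refine ⟨g⁻¹, inv_mem hg, n⁻¹, sec_congr (sec_inv hgs) ?_⟩
    funext t; fin_cases t <;> simp

lemma Kp_first : ∀ k ∈ ⁅KK, KK⁆, ∃ g ∈ ⁅(⁅GG, GG⁆ : Subgroup (AutT 3)), ⁅GG, GG⁆⁆,
    SecA g ![k, 1, 1] := by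
  intro k hk
  rw [Subgroup.commutator_def] at hk
  induction hk using closure_induction with
  | mem x hx =>
    obtain ⟨k₁, hk₁, k₂, hk₂, rfl⟩ := hx
    obtain ⟨g₁, hg₁, n, h1⟩ := claimB1 k₁ hk₁
    obtain ⟨g₂, hg₂, m, h2⟩ := claimB2 k₂ hk₂
    refine ⟨⁅g₁, g₂⁆, commutator_mem_commutator hg₁ hg₂, ?_⟩
    refine sec_congr (sec_mul (sec_mul (sec_mul h1 h2) (sec_inv h1)) (sec_inv h2)) ?_
    funext t
    fin_cases t
    · rfl
    · show (1 : AutT 3) * m * 1⁻¹ * m⁻¹ = 1; group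
    · show n * 1 * n⁻¹ * 1⁻¹ = (1 : AutT 3); group
  | one =>
    refine ⟨1, one_mem _, sec_congr sec_one ?_⟩
    funext t; fin_cases t <;> simp
  | mul x z hx hz ihx ihz =>
    obtain ⟨g, hg, hgs⟩ := ihx
    obtain ⟨g', hg', hgs'⟩ := ihz
    refine ⟨g * g', mul_mem hg hg', sec_congr (sec_mul hgs hgs') ?_⟩
    funext t; fin_cases t <;> simp
  | inv x hx ihx =>
    obtain ⟨g, hg, hgs⟩ := ihx
    refine ⟨g⁻¹, inv_mem hg, sec_congr (sec_inv hgs) ?_⟩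
    funext t; fin_cases t <;> simp

lemma shift_vec (a b c : AutT 3) : (fun x : Fin 3 => ![a, b, c] (x - 1)) = ![c, a, b] := by
  funext t; fin_cases t <;> rfl

lemma Kp_second : ∀ k ∈ ⁅KK, KK⁆, ∃ g ∈ ⁅(⁅GG, GG⁆ : Subgroup (AutT 3)), ⁅GG, GG⁆⁆,
    SecA g ![1, k, 1] := by
  intro k hk
  obtain ⟨g, hg, hgs⟩ := Kp_first k hk
  exact ⟨Ea * g * Ea⁻¹, G''_conj Ea_mem hg, sec_congr (sec_conj_a hgs) (shift_vec k 1 1)⟩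

lemma Kp_third : ∀ k ∈ ⁅KK, KK⁆, ∃ g ∈ ⁅(⁅GG, GG⁆ : Subgroup (AutT 3)), ⁅GG, GG⁆⁆,
    SecA g ![1, 1, k] := by
  intro k hk
  obtain ⟨g, hg, hgs⟩ := Kp_second k hk
  exact ⟨Ea * g * Ea⁻¹, G''_conj Ea_mem hg, sec_congr (sec_conj_a hgs) (shift_vec 1 k 1)⟩

end Stmt12


/-- Lemma 4.6: for the GGS-group `G` with constant defining vector
and `p = 3`, the second derived subgroup satisfies `ψ(G'') = K' × K' × K'`, where
`K = ⟨ba⁻¹⟩^G`:  `G''` consists exactly of the tree automorphisms whose three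
first-level sections lie in `K'`. -/
theorem stmt_12 :
    ((⁅⁅GGS 3, GGS 3⁆, ⁅GGS 3, GGS 3⁆⁆ : Subgroup (AutT 3)) : Set (AutT 3)) =
      {f : AutT 3 | ∀ x : Fin 3, ∃ k ∈ ⁅GGSK 3, GGSK 3⁆, ∀ w : Vert 3,
        (f : Equiv.Perm (Vert 3)) (x :: w) = x :: (k : Equiv.Perm (Vert 3)) w} := by
  open Stmt12 in
  ext f
  simp only [SetLike.mem_coe, Set.mem_setOf_eq]
  constructor
  · intro hf
    exact fun x => G''_le hf x
  · intro hf
    have hf' : f ∈ liftSub ⁅KK, KK⁆ := hf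
    obtain ⟨k, hk, hs⟩ := mem_liftSub_iff.mp hf'
    obtain ⟨g₀, hg₀, hs₀⟩ := Kp_first (k 0) (hk 0)
    obtain ⟨g₁, hg₁, hs₁⟩ := Kp_second (k 1) (hk 1)
    obtain ⟨g₂, hg₂, hs₂⟩ := Kp_third (k 2) (hk 2)
    have : f = g₀ * (g₁ * g₂) := by
      refine sec_ext hs (sec_mul hs₀ (sec_mul hs₁ hs₂)) ?_
      funext t; fin_cases t <;> simp
    rw [this]
    exact mul_mem hg₀ (mul_mem hg₁ hg₂)
end

section
/- For the GGS-group G with constant defining vector and p = 3, the second derived subgroup G'' is contained in γ₃(K), the third term of the lower central series of K = ⟨ba⁻¹⟩^G. -/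
namespace Stmt13

open Subgroup Pointwise
open scoped commutatorElement

/-! ### Abbreviations -/

abbrev a3 : ↥(AutT 3) := aut_a 3
abbrev b3 : ↥(AutT 3) := aut_b 3
abbrev t3 : ↥(AutT 3) := b3 * a3⁻¹
abbrev c3 : ↥(AutT 3) := ⁅a3, b3⁆

/-! ### General group-theoretic helper lemmas -/

theorem comm_mul_aux {H : Type*} [Group H] (x y z : H) :
    ⁅x, y * z⁆ = ⁅x, y⁆ * (y * ⁅x, z⁆ * y⁻¹) := by
  simp only [commutatorElement_def]
  group

theorem closure_pair_map {H1 H2 : Type*} [Group H1] [Group H2] (f : H1 →* H2)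
    (hf : Function.Surjective f) (x y : H1) (h : Subgroup.closure {x, y} = ⊤) :
    Subgroup.closure {f x, f y} = ⊤ := by
  have himg : ({f x, f y} : Set H2) = f '' {x, y} := (Set.image_pair f x y).symm
  rw [himg, ← MonoidHom.map_closure, h]
  exact Subgroup.map_top_of_surjective f hf

theorem pair_center {H : Type*} [Group H] {x y : H} (h : Subgroup.closure {x, y} = ⊤)
    (hxy : Commute x y) (p q : H) : Commute p q := by
  have hle : Subgroup.closure {x, y} ≤ Subgroup.centralizer {x, y} := by
    rw [Subgroup.closure_le]
    rintro z (rfl | rfl) <;> rw [SetLike.mem_coe, Subgroup.mem_centralizer_iff] <;>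
      rintro w (rfl | rfl)
    · rfl
    · exact hxy.eq.symm
    · exact hxy.eq
    · rfl
  have hcent : ∀ z : H, z ∈ Subgroup.centralizer {x, y} := fun z =>
    hle (h.symm ▸ Subgroup.mem_top z)
  have hxc : x ∈ Subgroup.center H := Subgroup.mem_center_iff.mpr fun g =>
    (Subgroup.mem_centralizer_iff.mp (hcent g) x (Or.inl rfl)).symm
  have hyc : y ∈ Subgroup.center H := Subgroup.mem_center_iff.mpr fun g =>
    (Subgroup.mem_centralizer_iff.mp (hcent g) y (Or.inr rfl)).symm
  have htop : (⊤ : Subgroup H) ≤ Subgroup.center H := by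
    rw [← h, Subgroup.closure_le]
    rintro z (rfl | rfl)
    · exact hxc
    · exact hyc
  exact Subgroup.mem_center_iff.mp (htop (Subgroup.mem_top q)) p

/-! ### Pointwise computation lemmas -/

@[simp] theorem perm_a (l : Vert 3) :
    ((a3 : AutT 3) : Equiv.Perm (Vert 3)) l = gA 3 l := rfl

@[simp] theorem perm_a_inv (l : Vert 3) :
    (((a3 : AutT 3) : Equiv.Perm (Vert 3)))⁻¹ l = gAI 3 l := rfl

@[simp] theorem perm_b (l : Vert 3) :
    ((b3 : AutT 3) : Equiv.Perm (Vert 3)) l = gB 3 l := rfl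

@[simp] theorem perm_b_inv (l : Vert 3) :
    (((b3 : AutT 3) : Equiv.Perm (Vert 3)))⁻¹ l = gBI 3 l := rfl

theorem gA_cons3 (x : Fin 3) (w : Vert 3) : gA 3 (x :: w) = (x + 1) :: w := rfl
theorem gAI_cons3 (x : Fin 3) (w : Vert 3) : gAI 3 (x :: w) = (x - 1) :: w := rfl
theorem gB_cons3 (x : Fin 3) (w : Vert 3) :
    gB 3 (x :: w) = if (x : ℕ) = 2 then x :: gB 3 w else x :: gA 3 w := rfl
theorem gBI_cons3 (x : Fin 3) (w : Vert 3) :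
    gBI 3 (x :: w) = if (x : ℕ) = 2 then x :: gBI 3 w else x :: gAI 3 w := rfl

theorem key0 : a3 ^ 3 = 1 := by
  apply Subtype.ext
  apply Equiv.ext
  intro l
  simp only [SubmonoidClass.coe_pow, OneMemClass.coe_one, pow_succ, pow_zero, one_mul,
    Equiv.Perm.mul_apply, Equiv.Perm.one_apply, perm_a]
  rcases l with _ | ⟨x, w⟩
  · rfl
  · fin_cases x <;> simp +decide [gA_cons3]

theorem key1 : ⁅c3, a3 * c3 * a3⁻¹⁆ = 1 := by
  apply Subtype.ext
  apply Equiv.ext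
  intro l
  show ((⁅⁅a3, b3⁆, a3 * ⁅a3, b3⁆ * a3⁻¹⁆ : AutT 3) : Equiv.Perm (Vert 3)) l
    = ((1 : AutT 3) : Equiv.Perm (Vert 3)) l
  simp only [commutatorElement_def, mul_inv_rev, inv_inv, MulMemClass.coe_mul,
    InvMemClass.coe_inv, OneMemClass.coe_one, Equiv.Perm.mul_apply, Equiv.Perm.one_apply,
    perm_a, perm_a_inv, perm_b, perm_b_inv]
  rcases l with _ | ⟨x, w⟩
  · rfl
  · fin_cases x <;>
      simp +decide [gA_cons3, gAI_cons3, gB_cons3, gBI_cons3, gAI_gA, gA_gAI, gBI_gB, gB_gBI]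

theorem key2 : ⁅c3, (a3 * a3) * c3 * (a3 * a3)⁻¹⁆ = 1 := by
  apply Subtype.ext
  apply Equiv.ext
  intro l
  show ((⁅⁅a3, b3⁆, (a3 * a3) * ⁅a3, b3⁆ * (a3 * a3)⁻¹⁆ : AutT 3) : Equiv.Perm (Vert 3)) l
    = ((1 : AutT 3) : Equiv.Perm (Vert 3)) l
  simp only [commutatorElement_def, mul_inv_rev, inv_inv, MulMemClass.coe_mul,
    InvMemClass.coe_inv, OneMemClass.coe_one, Equiv.Perm.mul_apply, Equiv.Perm.one_apply,
    perm_a, perm_a_inv, perm_b, perm_b_inv]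
  rcases l with _ | ⟨x, w⟩
  · rfl
  · fin_cases x <;>
      simp +decide [gA_cons3, gAI_cons3, gB_cons3, gBI_cons3, gAI_gA, gA_gAI, gBI_gB, gB_gBI]

/-! ### Membership lemmas -/

theorem a_mem : a3 ∈ GGS 3 := subset_closure (by left; rfl)

theorem b_mem : b3 ∈ GGS 3 := subset_closure (by right; rfl)

theorem t_mem_K : t3 ∈ GGSK 3 :=
  subset_closure ⟨1, (GGS 3).one_mem, by rw [one_mul, inv_one, mul_one]⟩

theorem conj_mem_K : ∀ g ∈ GGS 3, ∀ k ∈ GGSK 3, g * k * g⁻¹ ∈ GGSK 3 := by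
  intro g hg k hk
  induction hk using closure_induction with
  | mem x hx =>
    obtain ⟨h, hh, rfl⟩ := hx
    refine subset_closure ⟨g * h, mul_mem hg hh, by group⟩
  | one => simpa using (GGSK 3).one_mem
  | mul x y hx hy ihx ihy =>
    have h : g * (x * y) * g⁻¹ = (g * x * g⁻¹) * (g * y * g⁻¹) := by group
    rw [h]; exact mul_mem ihx ihy
  | inv x hx ihx =>
    have h : g * x⁻¹ * g⁻¹ = (g * x * g⁻¹)⁻¹ := by group
    rw [h]; exact inv_mem ihx

theorem K_le_G : GGSK 3 ≤ GGS 3 := by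
  rw [GGSK, closure_le]
  rintro x ⟨g, hg, rfl⟩
  exact mul_mem (mul_mem hg (mul_mem b_mem (inv_mem a_mem))) (inv_mem hg)

theorem c_mem_K : c3 ∈ GGSK 3 := by
  have h : c3 = (a3 * t3 * a3⁻¹) * t3⁻¹ := by
    show ⁅a3, b3⁆ = a3 * (b3 * a3⁻¹) * a3⁻¹ * (b3 * a3⁻¹)⁻¹
    rw [commutatorElement_def]
    group
  rw [h]
  exact mul_mem (conj_mem_K a3 a_mem t3 t_mem_K) (inv_mem t_mem_K)

/-! ### The subtype level -/

abbrev Gg := ↥(GGS 3)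

abbrev ah : Gg := ⟨a3, a_mem⟩
abbrev bh : Gg := ⟨b3, b_mem⟩
abbrev th : Gg := ⟨t3, K_le_G t_mem_K⟩
abbrev ch : Gg := ⁅ah, bh⁆

abbrev Kh : Subgroup Gg := (GGSK 3).subgroupOf (GGS 3)

instance Kh_normal : Kh.Normal := by
  constructor
  intro n hn g
  rw [mem_subgroupOf] at hn ⊢
  exact conj_mem_K g.1 g.2 n.1 hn

abbrev Nh : Subgroup Gg := ⁅⁅Kh, Kh⁆, Kh⁆

instance Nh_normal : Nh.Normal := inferInstance

theorem ch_mem_Kh : ch ∈ Kh := by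
  rw [mem_subgroupOf]
  have h : ((ch : Gg) : ↥(AutT 3)) = c3 := by
    show ((⁅ah, bh⁆ : Gg) : ↥(AutT 3)) = ⁅a3, b3⁆
    simp only [commutatorElement_def, MulMemClass.coe_mul, InvMemClass.coe_inv]
  rw [h]
  exact c_mem_K

theorem top_gen : (⊤ : Subgroup Gg) = closure {ah, bh} := by
  refine le_antisymm ?_ le_top
  intro g hg
  clear hg
  obtain ⟨x, hx⟩ := g
  induction hx using closure_induction with
  | mem y hy =>
    rcases hy with rfl | rfl
    · exact subset_closure (Or.inl rfl)
    · exact subset_closure (Or.inr rfl)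
  | one => exact one_mem _
  | mul y z hy hz ihy ihz => exact mul_mem ihy ihz
  | inv y hy ihy => exact inv_mem ihy

theorem top_le_sup : (⊤ : Subgroup Gg) ≤ Kh ⊔ zpowers ah := by
  rw [top_gen, closure_le]
  have hsub1 : Kh ≤ Kh ⊔ zpowers ah := le_sup_left
  have hsub2 : zpowers ah ≤ Kh ⊔ zpowers ah := le_sup_right
  rintro x (rfl | rfl)
  · exact hsub2 (mem_zpowers ah)
  · have hb : (bh : Gg) = th * ah := by
      apply Subtype.ext
      show b3 = b3 * a3⁻¹ * a3
      group
    rw [hb]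
    exact mul_mem (hsub1 (mem_subgroupOf.mpr t_mem_K)) (hsub2 (mem_zpowers ah))

theorem ah_cube : ah ^ 3 = 1 := by
  apply Subtype.ext
  show a3 ^ 3 = 1
  exact key0

theorem decomp (g : Gg) : ∃ k ∈ Kh, ∃ m : Gg,
    (m = 1 ∨ m = ah ∨ m = ah * ah) ∧ g = k * m := by
  have hg : g ∈ Kh ⊔ zpowers ah := top_le_sup (mem_top g)
  have hg2 : g ∈ ((Kh : Set Gg) * (zpowers ah : Set Gg)) := by
    rw [← Subgroup.normal_mul]
    exact hg
  obtain ⟨k, hk, m, hm, hkm⟩ := hg2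
  obtain ⟨n, rfl⟩ := hm
  subst hkm
  beta_reduce
  obtain ⟨q, r, hr0, hr3, rfl⟩ : ∃ q r : ℤ, 0 ≤ r ∧ r < 3 ∧ n = 3 * q + r :=
    ⟨n / 3, n % 3, Int.emod_nonneg n (by norm_num), Int.emod_lt_of_pos n (by norm_num),
      (Int.mul_ediv_add_emod n 3).symm⟩
  have h3 : ah ^ (3 : ℤ) = 1 := by
    rw [show (3 : ℤ) = ((3 : ℕ) : ℤ) from rfl, zpow_natCast, ah_cube]
  have hzn : ah ^ (3 * q + r) = ah ^ r := by
    rw [zpow_add, zpow_mul, h3, one_zpow, one_mul]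
  rw [hzn]
  interval_cases r
  · exact ⟨k, hk, 1, Or.inl rfl, by rw [zpow_zero]⟩
  · exact ⟨k, hk, ah, Or.inr (Or.inl rfl), by rw [zpow_one]⟩
  · exact ⟨k, hk, ah * ah, Or.inr (Or.inr rfl),
      by rw [show (2 : ℤ) = 1 + 1 from rfl, zpow_add, zpow_one]⟩

theorem key_lift1 : ⁅ch, ah * ch * ah⁻¹⁆ = 1 := by
  apply Subtype.ext
  have h : (((⁅ch, ah * ch * ah⁻¹⁆ : Gg)) : ↥(AutT 3)) = ⁅c3, a3 * c3 * a3⁻¹⁆ := by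
    show (((⁅⁅ah, bh⁆, ah * ⁅ah, bh⁆ * ah⁻¹⁆ : Gg)) : ↥(AutT 3))
      = ⁅⁅a3, b3⁆, a3 * ⁅a3, b3⁆ * a3⁻¹⁆
    simp only [commutatorElement_def, MulMemClass.coe_mul, InvMemClass.coe_inv]
  rw [h, key1]
  rfl

theorem key_lift2 : ⁅ch, (ah * ah) * ch * (ah * ah)⁻¹⁆ = 1 := by
  apply Subtype.ext
  have h : (((⁅ch, (ah * ah) * ch * (ah * ah)⁻¹⁆ : Gg)) : ↥(AutT 3))
      = ⁅c3, (a3 * a3) * c3 * (a3 * a3)⁻¹⁆ := by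
    show (((⁅⁅ah, bh⁆, (ah * ah) * ⁅ah, bh⁆ * (ah * ah)⁻¹⁆ : Gg)) : ↥(AutT 3))
      = ⁅⁅a3, b3⁆, (a3 * a3) * ⁅a3, b3⁆ * (a3 * a3)⁻¹⁆
    simp only [commutatorElement_def, MulMemClass.coe_mul, InvMemClass.coe_inv]
  rw [h, key2]
  rfl

theorem key_all (g : Gg) : ⁅ch, g * ch * g⁻¹⁆ ∈ Nh := by
  obtain ⟨k, hk, m, hm, rfl⟩ := decomp g
  have hcd : ⁅ch, m * ch * m⁻¹⁆ = 1 := by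
    rcases hm with rfl | rfl | rfl
    · have h : (1 : Gg) * ch * (1 : Gg)⁻¹ = ch := by group
      rw [h]
      exact commutatorElement_eq_one_iff_commute.mpr (Commute.refl ch)
    · exact key_lift1
    · exact key_lift2
  have hdK : m * ch * m⁻¹ ∈ Kh := Kh_normal.conj_mem ch ch_mem_Kh m
  have hzmem : (m * ch * m⁻¹)⁻¹ * k * (m * ch * m⁻¹) * k⁻¹ ∈ ⁅Kh, Kh⁆ := by
    have h := commutator_mem_commutator (inv_mem hdK) hk
    have h2 : ⁅(m * ch * m⁻¹)⁻¹, k⁆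
        = (m * ch * m⁻¹)⁻¹ * k * (m * ch * m⁻¹) * k⁻¹ := by
      rw [commutatorElement_def]
      group
    rwa [h2] at h
  have hrw : (k * m) * ch * (k * m)⁻¹
      = (m * ch * m⁻¹) * ((m * ch * m⁻¹)⁻¹ * k * (m * ch * m⁻¹) * k⁻¹) := by
    group
  rw [hrw, comm_mul_aux, hcd, one_mul]
  have hcz : ⁅ch, (m * ch * m⁻¹)⁻¹ * k * (m * ch * m⁻¹) * k⁻¹⁆ ∈ Nh := by
    rw [show Nh = ⁅Kh, ⁅Kh, Kh⁆⁆ from commutator_comm _ _]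
    exact commutator_mem_commutator ch_mem_Kh hzmem
  exact Nh_normal.conj_mem _ hcz (m * ch * m⁻¹)

/-! ### The quotient -/

abbrev Qg := Gg ⧸ Nh

abbrev pi : Gg →* Qg := QuotientGroup.mk' Nh

theorem hCconj (q : Qg) : ⁅pi ch, q * pi ch * q⁻¹⁆ = 1 := by
  obtain ⟨g, rfl⟩ := QuotientGroup.mk'_surjective Nh q
  rw [← map_mul, ← map_inv, ← map_mul, ← map_commutatorElement]
  exact (QuotientGroup.eq_one_iff _).mpr (key_all g)

abbrev NC : Subgroup Qg := normalClosure {pi ch}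

theorem NC_le_cent : NC ≤ centralizer {pi ch} := by
  refine (closure_le _).mpr ?_
  intro x hx
  rw [Group.mem_conjugatesOfSet_iff] at hx
  obtain ⟨c', hc', hconj⟩ := hx
  rw [Set.mem_singleton_iff] at hc'
  subst hc'
  obtain ⟨q, hq⟩ := isConj_iff.mp hconj
  rw [SetLike.mem_coe, mem_centralizer_iff]
  intro h hh
  rw [Set.mem_singleton_iff] at hh
  subst hh
  have h1 := hCconj q
  rw [hq] at h1
  exact (commutatorElement_eq_one_iff_commute.mp h1).eq

theorem cent_NC_normal : (centralizer (NC : Set Qg)).Normal := by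
  constructor
  intro n hn g
  rw [mem_centralizer_iff] at hn ⊢
  intro h hh
  have h' : g⁻¹ * h * g ∈ NC := by
    have h2 := (normalClosure_normal (s := {pi ch})).conj_mem h hh g⁻¹
    simpa only [inv_inv] using h2
  have h3 := hn _ h'
  calc h * (g * n * g⁻¹) = g * ((g⁻¹ * h * g) * n) * g⁻¹ := by group
    _ = g * (n * (g⁻¹ * h * g)) * g⁻¹ := by rw [h3]
    _ = g * n * g⁻¹ * h := by group

theorem NC_le_cent_NC : NC ≤ centralizer (NC : Set Qg) := by
  haveI := cent_NC_normal
  apply normalClosure_le_normal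
  intro x hx
  rw [Set.mem_singleton_iff] at hx
  subst hx
  rw [SetLike.mem_coe, mem_centralizer_iff]
  intro h hh
  exact (mem_centralizer_iff.mp (NC_le_cent hh) (pi ch) rfl).symm

theorem NC_comm {x y : Qg} (hx : x ∈ NC) (hy : y ∈ NC) : ⁅x, y⁆ = 1 := by
  apply commutatorElement_eq_one_iff_commute.mpr
  exact mem_centralizer_iff.mp (NC_le_cent_NC hy) x hx

theorem comm_top_le_NC : ⁅(⊤ : Subgroup Qg), ⊤⁆ ≤ NC := by
  have hgenQ : closure {pi ah, pi bh} = (⊤ : Subgroup Qg) :=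
    closure_pair_map pi (QuotientGroup.mk'_surjective Nh) ah bh top_gen.symm
  have hgen2 : closure {(QuotientGroup.mk' NC) (pi ah), (QuotientGroup.mk' NC) (pi bh)}
      = (⊤ : Subgroup (Qg ⧸ NC)) :=
    closure_pair_map (QuotientGroup.mk' NC) (QuotientGroup.mk'_surjective NC) _ _ hgenQ
  have hAB : Commute ((QuotientGroup.mk' NC) (pi ah)) ((QuotientGroup.mk' NC) (pi bh)) := by
    apply commutatorElement_eq_one_iff_commute.mp
    rw [← map_commutatorElement, ← map_commutatorElement]
    exact (QuotientGroup.eq_one_iff _).mpr (subset_normalClosure rfl)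
  rw [commutator_le]
  intro p _ q _
  have h : (QuotientGroup.mk' NC) ⁅p, q⁆ = 1 := by
    rw [map_commutatorElement]
    exact commutatorElement_eq_one_iff_commute.mpr (pair_center hgen2 hAB _ _)
  exact (QuotientGroup.eq_one_iff _).mp h

theorem Qg_comm_bot :
    ⁅⁅(⊤ : Subgroup Qg), (⊤ : Subgroup Qg)⁆, ⁅(⊤ : Subgroup Qg), (⊤ : Subgroup Qg)⁆⁆ = (⊥ : Subgroup Qg) := by
  rw [eq_bot_iff, commutator_le]
  intro p hp q hq
  rw [mem_bot]
  exact NC_comm (comm_top_le_NC hp) (comm_top_le_NC hq)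

theorem Gg_comm_le :
    ⁅⁅(⊤ : Subgroup Gg), (⊤ : Subgroup Gg)⁆, ⁅(⊤ : Subgroup Gg), (⊤ : Subgroup Gg)⁆⁆ ≤ Nh := by
  intro x hx
  have hmem : pi x ∈ Subgroup.map pi ⁅⁅(⊤ : Subgroup Gg), (⊤ : Subgroup Gg)⁆, ⁅(⊤ : Subgroup Gg), (⊤ : Subgroup Gg)⁆⁆ :=
    mem_map_of_mem _ hx
  rw [map_commutator, map_commutator,
    map_top_of_surjective _ (QuotientGroup.mk'_surjective Nh), Qg_comm_bot] at hmem
  have h1 : pi x = 1 := mem_bot.mp hmem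
  have h2 := QuotientGroup.ker_mk' Nh
  rw [← h2, MonoidHom.mem_ker]
  exact h1

end Stmt13

/-- Proposition 4.7: for the GGS-group `G` with constant defining
vector and `p = 3`, the second derived subgroup `G''` is contained in `γ₃(K)`, the
third term of the lower central series of `K = ⟨ba⁻¹⟩^G`
(`γ₃(K) = [[K,K],K]`). -/
theorem stmt_13 :
    ⁅⁅GGS 3, GGS 3⁆, ⁅GGS 3, GGS 3⁆⁆ ≤ ⁅⁅GGSK 3, GGSK 3⁆, GGSK 3⁆ := by
  have h1 : Subgroup.map (GGS 3).subtype
      ⁅⁅(⊤ : Subgroup Stmt13.Gg), (⊤ : Subgroup Stmt13.Gg)⁆, ⁅(⊤ : Subgroup Stmt13.Gg), (⊤ : Subgroup Stmt13.Gg)⁆⁆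
      = ⁅⁅GGS 3, GGS 3⁆, ⁅GGS 3, GGS 3⁆⁆ := by
    rw [Subgroup.map_commutator, Subgroup.map_commutator, ← MonoidHom.range_eq_map,
      Subgroup.range_subtype]
  have h2 : Subgroup.map (GGS 3).subtype Stmt13.Nh = ⁅⁅GGSK 3, GGSK 3⁆, GGSK 3⁆ := by
    rw [Subgroup.map_commutator, Subgroup.map_commutator, Subgroup.subgroupOf_map_subtype,
      inf_eq_left.mpr Stmt13.K_le_G]
  calc ⁅⁅GGS 3, GGS 3⁆, ⁅GGS 3, GGS 3⁆⁆
      = Subgroup.map (GGS 3).subtype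
        ⁅⁅(⊤ : Subgroup Stmt13.Gg), (⊤ : Subgroup Stmt13.Gg)⁆, ⁅(⊤ : Subgroup Stmt13.Gg), (⊤ : Subgroup Stmt13.Gg)⁆⁆ := h1.symm
    _ ≤ Subgroup.map (GGS 3).subtype Stmt13.Nh := Subgroup.map_mono Stmt13.Gg_comm_le
    _ = ⁅⁅GGSK 3, GGSK 3⁆, GGSK 3⁆ := h2
end
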